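/- Let r > 0, let m = (m₁,m₂,m₃) ∈ ℝ³, and let M = (M_{jk}) be a real symmetric 3×3 matrix. Then there exists a Borel probability measure μ on the sphere {x ∈ ℝ³ : ‖x‖ = r} with ∫ x_j dμ(x) = m_j and ∫ x_j x_k dμ(x) = M_{jk} for all j,k, if and only if tr M = r² and the matrix (M_{jk} − m_j m_k)_{j,k} is positive semidefinite. -/

import Mathlib

open MeasureTheory

noncomputable section

namespace SphereMomentAux

local notation "E3" => EuclideanSpace ℝ (Fin 3)


lemma norm_sq_eq' (x : E3) : ‖x‖ ^ 2 = ∑ a, x a ^ 2 := by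
  rw [EuclideanSpace.norm_eq, Real.sq_sqrt (by positivity)]
  simp [Real.norm_eq_abs, sq_abs]

lemma abs_coord_le (x : E3) (a : Fin 3) : |x a| ≤ ‖x‖ := by
  rw [EuclideanSpace.norm_eq, ← Real.sqrt_sq_eq_abs]
  apply Real.sqrt_le_sqrt
  have : ∀ i : Fin 3, ‖x i‖ ^ 2 = x i ^ 2 := fun i => by
    simp [Real.norm_eq_abs, sq_abs]
  simp only [this]
  exact Finset.single_le_sum (f := fun i => x i ^ 2) (fun i _ => sq_nonneg _)
    (Finset.mem_univ a)

theorem fwd (r : ℝ) (hr : 0 < r)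
    (m : Fin 3 → ℝ) (M : Matrix (Fin 3) (Fin 3) ℝ) (hM : M.IsSymm)
    (μ : Measure E3) (hp : IsProbabilityMeasure μ)
    (hs : μ (Metric.sphere (0 : E3) r)ᶜ = 0)
    (h1 : ∀ a : Fin 3, ∫ x, x a ∂μ = m a)
    (h2 : ∀ a b : Fin 3, ∫ x, x a * x b ∂μ = M a b) :
    M.trace = r ^ 2 ∧
      (Matrix.of fun a b => M a b - m a * m b : Matrix (Fin 3) (Fin 3) ℝ).PosSemidef := by
  have hae : ∀ᵐ x ∂μ, ‖x‖ = r := by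
    rw [ae_iff]
    convert hs using 2
    ext x
    simp [mem_sphere_zero_iff_norm]
  have hcont : ∀ a : Fin 3, Continuous fun x : E3 => x a :=
    fun a => (EuclideanSpace.proj a).continuous
  have hint2 : ∀ a b : Fin 3, Integrable (fun x : E3 => x a * x b) μ := by
    intro a b
    refine (integrable_const (r * r)).mono'
      (((hcont a).mul (hcont b)).aestronglyMeasurable) ?_
    filter_upwards [hae] with x hx
    rw [Real.norm_eq_abs, abs_mul]
    calc |x a| * |x b| ≤ ‖x‖ * ‖x‖ :=
          mul_le_mul (abs_coord_le x a) (abs_coord_le x b) (abs_nonneg _) (norm_nonneg _)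
      _ = r * r := by rw [hx]
  have hint1 : ∀ a : Fin 3, Integrable (fun x : E3 => x a) μ := by
    intro a
    refine (integrable_const r).mono' ((hcont a).aestronglyMeasurable) ?_
    filter_upwards [hae] with x hx
    rw [Real.norm_eq_abs, ← hx]; exact abs_coord_le x a
  -- central second moments
  have base : ∀ a b : Fin 3, Integrable (fun x : E3 => (x a - m a) * (x b - m b)) μ ∧
      ∫ x, (x a - m a) * (x b - m b) ∂μ = M a b - m a * m b := by
    intro a b
    have hA : Integrable (fun x : E3 => x a * x b) μ := hint2 a b
    have hB : Integrable (fun x : E3 => m b * x a) μ := (hint1 a).const_mul _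
    have hC : Integrable (fun x : E3 => m a * x b) μ := (hint1 b).const_mul _
    have hAB : Integrable (fun x : E3 => x a * x b - m b * x a) μ := hA.sub hB
    have hABC : Integrable (fun x : E3 => x a * x b - m b * x a - m a * x b) μ := hAB.sub hC
    have e : (fun x : E3 => (x a - m a) * (x b - m b))
        = fun x : E3 => x a * x b - m b * x a - m a * x b + m a * m b := by
      funext x; ring
    constructor
    · rw [e]; exact hABC.add (integrable_const _)
    · rw [e, integral_add hABC (integrable_const _), integral_sub hAB hC,
        integral_sub hA hB, integral_const_mul _ _, integral_const_mul _ _, integral_const,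
        h1, h1, h2]
      simp only [probReal_univ, ENNReal.toReal_one, smul_eq_mul, one_mul]
      ring
  refine ⟨?_, ?_, ?_⟩
  · have key : ∫ x, (∑ a : Fin 3, x a * x a) ∂μ = M.trace := by
      rw [integral_finset_sum _ (fun a _ => hint2 a a)]
      simp [Matrix.trace, Matrix.diag, h2]
    rw [← key]
    have : (fun x : E3 => ∑ a, x a * x a) =ᵐ[μ] fun _ => r ^ 2 := by
      filter_upwards [hae] with x hx
      have := norm_sq_eq' x
      rw [hx] at this
      simpa [sq] using this.symm
    rw [integral_congr_ae this, integral_const]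
    simp
  · show _ = _
    ext a b
    simp only [Matrix.conjTranspose_apply, Matrix.of_apply, star_trivial]
    linarith [Matrix.IsSymm.apply hM a b]
  · intro v
    have hintc : ∀ a b : Fin 3,
        Integrable (fun x : E3 => v a * v b * ((x a - m a) * (x b - m b))) μ :=
      fun a b => ((base a b).1).const_mul _
    have hval : ∀ a b : Fin 3,
        ∫ x, v a * v b * ((x a - m a) * (x b - m b)) ∂μ
          = v a * v b * (M a b - m a * m b) := by
      intro a b
      rw [integral_const_mul, (base a b).2]
    have hnn : 0 ≤ ∫ x, (∑ a : Fin 3, v a * (x a - m a)) ^ 2 ∂μ :=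
      integral_nonneg (fun x => sq_nonneg _)
    have hexp : (fun x : E3 => (∑ a : Fin 3, v a * (x a - m a)) ^ 2)
        = fun x : E3 => ∑ a : Fin 3, ∑ b : Fin 3,
            v a * v b * ((x a - m a) * (x b - m b)) := by
      funext x
      rw [sq, Finset.sum_mul_sum]
      exact Finset.sum_congr rfl fun a _ => Finset.sum_congr rfl fun b _ => by ring
    rw [hexp] at hnn
    rw [integral_finset_sum _ (fun a _ => integrable_finset_sum _ (fun b _ => hintc a b))] at hnn
    simp_rw [integral_finset_sum _ (fun b _ => hintc _ b), hval] at hnn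
    convert hnn using 1
    · rfl
    simp (disch := simp) only [Finsupp.sum_fintype, star_trivial, Matrix.of_apply]
    refine Finset.sum_congr rfl fun a _ => ?_
    exact Finset.sum_congr rfl fun b _ => by ring


lemma norm_sq_eq'' (x : E3) : ‖x‖ ^ 2 = ∑ a, x a ^ 2 := by
  rw [EuclideanSpace.norm_eq, Real.sq_sqrt (by positivity)]
  simp [Real.norm_eq_abs, sq_abs]

lemma integrable_wdirac (f : E3 → ℝ) (x : E3) (q : ℝ) :
    Integrable f (ENNReal.ofReal q • Measure.dirac x) := by
  have h1 : Integrable f (Measure.dirac x) := by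
    refine (integrable_const (f x)).congr ?_
    rw [Filter.EventuallyEq, MeasureTheory.ae_dirac_eq]
    exact Filter.eventually_pure.mpr rfl
  exact h1.smul_measure ENNReal.ofReal_ne_top

lemma alg_wsum (a b c t : ℝ) (hc : c ≠ 0) (ht : t ≠ 0) :
    a/c * ((b + t)/(2*t)) + a/c * ((-b + t)/(2*t)) = a/c := by
  field_simp; ring

lemma alg_sphere_p (a b c t : ℝ) (ha : a ≠ 0) (h2 : t^2 = b^2 + a*c) :
    a * ((-b + t)/a)^2 + 2*b*((-b + t)/a) = c := by
  field_simp; linear_combination h2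

lemma alg_sphere_m (a b c t : ℝ) (ha : a ≠ 0) (h2 : t^2 = b^2 + a*c) :
    a * ((-b + -t)/a)^2 + 2*b*((-b + -t)/a) = c := by
  field_simp; linear_combination h2

lemma alg_mean (a b c t mm bb : ℝ) (ha : a ≠ 0) (hc : c ≠ 0) (ht : t ≠ 0) :
    a/c * ((b + t)/(2*t)) * (mm + (-b + t)/a * bb)
      + a/c * ((-b + t)/(2*t)) * (mm + (-b + -t)/a * bb) = a/c * mm := by
  field_simp; ring

lemma alg_sec (a b c t mm bb mm' bb' : ℝ) (ha : a ≠ 0) (hc : c ≠ 0) (ht : t ≠ 0)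
    (h2 : t^2 = b^2 + a*c) :
    a/c * ((b + t)/(2*t)) * ((mm + (-b + t)/a * bb) * (mm' + (-b + t)/a * bb'))
      + a/c * ((-b + t)/(2*t)) * ((mm + (-b + -t)/a * bb) * (mm' + (-b + -t)/a * bb'))
      = a/c * (mm * mm') + bb * bb' := by
  field_simp
  linear_combination (2 * t * bb * bb') * h2

theorem bwd (r : ℝ) (hr : 0 < r) (m : Fin 3 → ℝ) (M : Matrix (Fin 3) (Fin 3) ℝ)
    (hM : M.IsSymm) (htr : M.trace = r ^ 2)
    (hpsd : (Matrix.of fun a b => M a b - m a * m b : Matrix (Fin 3) (Fin 3) ℝ).PosSemidef) :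
    ∃ μ : Measure E3, IsProbabilityMeasure μ ∧
      μ (Metric.sphere (0 : E3) r)ᶜ = 0 ∧
      (∀ a : Fin 3, ∫ x, x a ∂μ = m a) ∧
      (∀ a b : Fin 3, ∫ x, x a * x b ∂μ = M a b) := by
  obtain ⟨B, hB⟩ : ∃ B : Matrix (Fin 3) (Fin 3) ℝ,
      (Matrix.of fun a b => M a b - m a * m b : Matrix (Fin 3) (Fin 3) ℝ) = Matrix.conjTranspose B * B := by
    open scoped MatrixOrder in exact CStarAlgebra.nonneg_iff_eq_star_mul_self.mp hpsd.nonneg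
  have hE : ∀ a b, M a b - m a * m b = ∑ i, B i a * B i b := by
    intro a b
    have := congrFun (congrFun hB a) b
    simpa [Matrix.mul_apply, Matrix.conjTranspose_apply] using this
  set c := r ^ 2 - ∑ a, m a ^ 2 with hc
  have htrsum : ∑ a : Fin 3, (∑ i : Fin 3, B i a * B i a) = c := by
    have h0 : ∑ a : Fin 3, (M a a - m a * m a) = c := by
      rw [hc, ← htr]
      simp [Matrix.trace, Matrix.diag, Finset.sum_sub_distrib, sq]
    rw [← h0]
    exact Finset.sum_congr rfl fun a _ => (hE a a).symm
  have hcnn : 0 ≤ c := by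
    rw [← htrsum]
    exact Finset.sum_nonneg fun a _ => Finset.sum_nonneg fun i _ => mul_self_nonneg _
  by_cases hc0 : c = 0
  · -- degenerate case: point mass at m
    have hMab : ∀ a b, M a b = m a * m b := by
      have hB0 : ∀ i a, B i a = 0 := by
        have hz : ∑ a : Fin 3, (∑ i : Fin 3, B i a * B i a) = 0 := by rw [htrsum, hc0]
        intro i a
        have h1 : ∀ a ∈ Finset.univ, (0:ℝ) ≤ ∑ i : Fin 3, B i a * B i a :=
          fun a _ => Finset.sum_nonneg fun i _ => mul_self_nonneg _
        have h2 := (Finset.sum_eq_zero_iff_of_nonneg h1).mp hz a (Finset.mem_univ a)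
        have h3 := (Finset.sum_eq_zero_iff_of_nonneg
          (fun i _ => mul_self_nonneg (B i a))).mp h2 i (Finset.mem_univ i)
        nlinarith [h3]
      intro a b
      have := hE a b
      simp [hB0] at this
      linarith
    set mE : E3 := (WithLp.equiv 2 (Fin 3 → ℝ)).symm m with hmE
    have hmEa : ∀ a, mE a = m a := fun a => rfl
    have hnm : ‖mE‖ = r := by
      have h2 : ‖mE‖ ^ 2 = r ^ 2 := by
        rw [norm_sq_eq'']
        have h3 : ∑ a : Fin 3, mE a ^ 2 = ∑ a, m a ^ 2 := rfl
        rw [h3]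
        have h5 := hc0
        rw [hc] at h5
        linarith
      have h4 := congrArg Real.sqrt h2
      rwa [Real.sqrt_sq (norm_nonneg _), Real.sqrt_sq hr.le] at h4
    refine ⟨Measure.dirac mE, inferInstance, ?_, ?_, ?_⟩
    · rw [Measure.dirac_apply' _ Metric.isClosed_sphere.measurableSet.compl]
      apply Set.indicator_of_notMem
      simp [mem_sphere_zero_iff_norm, hnm]
    · intro a
      rw [integral_dirac]
      exact hmEa a
    · intro a b
      rw [integral_dirac, hMab a b]
      rfl
  · have hcpos : 0 < c := lt_of_le_of_ne hcnn (Ne.symm hc0)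
    set A : Fin 3 → ℝ := fun i => ∑ a, B i a ^ 2 with hA
    set β : Fin 3 → ℝ := fun i => ∑ a, m a * B i a with hβ
    set t : Fin 3 → ℝ := fun i => Real.sqrt (β i ^ 2 + A i * c) with ht
    set s : Fin 3 → Bool → ℝ :=
      fun i ε => (-β i + (if ε then t i else -t i)) / A i with hsdef
    set q : Fin 3 → Bool → ℝ :=
      fun i ε => (A i / c) * (((if ε then β i else -β i) + t i) / (2 * t i)) with hq
    set pt : Fin 3 → Bool → E3 :=
      fun i ε => (WithLp.toLp 2 (fun a => m a + s i ε * B i a : Fin 3 → ℝ) : E3) with hpt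
    have hAnn : ∀ i, 0 ≤ A i := fun i => Finset.sum_nonneg fun a _ => sq_nonneg _
    have hA0 : ∀ i, A i = 0 → ∀ a, B i a = 0 := by
      intro i hi a
      have h1 := (Finset.sum_eq_zero_iff_of_nonneg
        (fun a (_ : a ∈ Finset.univ) => sq_nonneg (B i a))).mp hi a (Finset.mem_univ a)
      exact (pow_eq_zero_iff two_ne_zero).mp h1
    have hq0 : ∀ i, A i = 0 → ∀ ε, q i ε = 0 := by
      intro i hi ε
      show (A i / c) * _ = 0
      rw [hi, zero_div, zero_mul]
    have hfacts : ∀ i, A i ≠ 0 → 0 < A i ∧ 0 < t i ∧ t i ^ 2 = β i ^ 2 + A i * c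
        ∧ |β i| ≤ t i := by
      intro i hi
      have hApos : 0 < A i := lt_of_le_of_ne (hAnn i) (Ne.symm hi)
      have hD : 0 < β i ^ 2 + A i * c := by nlinarith [sq_nonneg (β i)]
      have htpos : 0 < t i := Real.sqrt_pos.mpr hD
      have ht2 : t i ^ 2 = β i ^ 2 + A i * c := Real.sq_sqrt hD.le
      have habs : |β i| ≤ t i := by
        rw [← Real.sqrt_sq_eq_abs]
        exact Real.sqrt_le_sqrt (by nlinarith)
      exact ⟨hApos, htpos, ht2, habs⟩
    have hqnn : ∀ i ε, 0 ≤ q i ε := by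
      intro i ε
      rcases eq_or_ne (A i) 0 with h | h
      · rw [hq0 i h]
      · obtain ⟨hApos, htpos, _, habs⟩ := hfacts i h
        have h1 : 0 ≤ (if ε then β i else -β i) + t i := by
          cases ε
          · show 0 ≤ -β i + t i
            linarith [le_abs_self (β i)]
          · show 0 ≤ β i + t i
            linarith [neg_abs_le (β i)]
        have h2 : 0 ≤ A i / c := div_nonneg hApos.le hcpos.le
        have h3 : 0 ≤ ((if ε then β i else -β i) + t i) / (2 * t i) :=
          div_nonneg h1 (by linarith)
        exact mul_nonneg h2 h3
    have hqsumi : ∀ i, q i true + q i false = A i / c := by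
      intro i
      rcases eq_or_ne (A i) 0 with h | h
      · rw [hq0 i h, hq0 i h, h, zero_div, add_zero]
      · obtain ⟨hApos, htpos, ht2, _⟩ := hfacts i h
        show A i / c * ((β i + t i) / (2 * t i))
            + A i / c * ((-β i + t i) / (2 * t i)) = A i / c
        exact alg_wsum _ _ _ _ hc0 (ne_of_gt htpos)
    have hAsum : ∑ i, A i = c :=
      calc ∑ i, A i = ∑ i, ∑ a, B i a * B i a :=
            Finset.sum_congr rfl fun i _ => Finset.sum_congr rfl fun a _ => pow_two (B i a)
        _ = ∑ a, ∑ i, B i a * B i a := Finset.sum_comm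
        _ = c := htrsum
    have hsphere : ∀ i ε, A i ≠ 0 → ‖pt i ε‖ = r := by
      intro i ε h
      obtain ⟨hApos, htpos, ht2, _⟩ := hfacts i h
      have hs2 : A i * s i ε ^ 2 + 2 * β i * s i ε = c := by
        cases ε
        · show A i * ((-β i + -t i) / A i) ^ 2 + 2 * β i * ((-β i + -t i) / A i) = c
          exact alg_sphere_m _ _ _ _ h ht2
        · show A i * ((-β i + t i) / A i) ^ 2 + 2 * β i * ((-β i + t i) / A i) = c
          exact alg_sphere_p _ _ _ _ h ht2
      have hexp : ‖pt i ε‖ ^ 2 = r ^ 2 := by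
        rw [norm_sq_eq'']
        have h1 : ∀ a : Fin 3, (pt i ε) a ^ 2
            = m a ^ 2 + (2 * s i ε) * (m a * B i a) + s i ε ^ 2 * B i a ^ 2 := by
          intro a
          show (m a + s i ε * B i a) ^ 2 = _
          ring
        rw [Finset.sum_congr rfl fun a _ => h1 a]
        rw [Finset.sum_add_distrib, Finset.sum_add_distrib, ← Finset.mul_sum, ← Finset.mul_sum]
        have e1 : ∑ a, m a * B i a = β i := rfl
        have e2 : ∑ a, B i a ^ 2 = A i := rfl
        have e3 : ∑ a, m a ^ 2 = r ^ 2 - c := by rw [hc]; ring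
        rw [e1, e2, e3]
        linear_combination hs2
      have h4 := congrArg Real.sqrt hexp
      rwa [Real.sqrt_sq (norm_nonneg _), Real.sqrt_sq hr.le] at h4
    have hmean : ∀ i a, q i true * (pt i true) a + q i false * (pt i false) a
        = (A i / c) * m a := by
      intro i a
      rcases eq_or_ne (A i) 0 with h | h
      · rw [hq0 i h true, hq0 i h false, h]
        simp
      · obtain ⟨hApos, htpos, ht2, _⟩ := hfacts i h
        show A i / c * ((β i + t i) / (2 * t i)) * (m a + (-β i + t i) / A i * B i a)
            + A i / c * ((-β i + t i) / (2 * t i)) * (m a + (-β i + -t i) / A i * B i a)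
            = A i / c * m a
        exact alg_mean _ _ _ _ _ _ h hc0 (ne_of_gt htpos)
    have hsec : ∀ i a b, q i true * ((pt i true) a * (pt i true) b)
        + q i false * ((pt i false) a * (pt i false) b)
        = (A i / c) * (m a * m b) + B i a * B i b := by
      intro i a b
      rcases eq_or_ne (A i) 0 with h | h
      · rw [hq0 i h true, hq0 i h false, hA0 i h a, h]
        simp
      · obtain ⟨hApos, htpos, ht2, _⟩ := hfacts i h
        show A i / c * ((β i + t i) / (2 * t i))
              * ((m a + (-β i + t i) / A i * B i a) * (m b + (-β i + t i) / A i * B i b))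
            + A i / c * ((-β i + t i) / (2 * t i))
              * ((m a + (-β i + -t i) / A i * B i a) * (m b + (-β i + -t i) / A i * B i b))
            = A i / c * (m a * m b) + B i a * B i b
        exact alg_sec _ _ _ _ _ _ _ _ h hc0 (ne_of_gt htpos) ht2
    set μ : Measure E3 :=
      ∑ p : Fin 3 × Bool, ENNReal.ofReal (q p.1 p.2) • Measure.dirac (pt p.1 p.2) with hμ
    have hqsum : ∑ p : Fin 3 × Bool, q p.1 p.2 = 1 := by
      rw [Fintype.sum_prod_type]
      have h5 : ∀ i, ∑ ε : Bool, q i ε = A i / c := by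
        intro i
        rw [Fintype.sum_bool]
        exact hqsumi i
      rw [Finset.sum_congr rfl fun i _ => h5 i, ← Finset.sum_div, hAsum, div_self hc0]
    have hint : ∀ (f : E3 → ℝ), ∀ p ∈ (Finset.univ : Finset (Fin 3 × Bool)),
        Integrable f (ENNReal.ofReal (q p.1 p.2) • Measure.dirac (pt p.1 p.2)) :=
      fun f p _ => integrable_wdirac f _ _
    have hintegral : ∀ (f : E3 → ℝ),
        ∫ x, f x ∂μ = ∑ p : Fin 3 × Bool, q p.1 p.2 * f (pt p.1 p.2) := by
      intro f
      rw [hμ, integral_finset_sum_measure (hint f)]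
      refine Finset.sum_congr rfl fun p _ => ?_
      rw [integral_smul_measure, integral_dirac, ENNReal.toReal_ofReal (hqnn p.1 p.2)]
      rfl
    refine ⟨μ, ?_, ?_, ?_, ?_⟩
    · constructor
      rw [hμ, Measure.finset_sum_apply]
      have h6 : ∀ p : Fin 3 × Bool,
          (ENNReal.ofReal (q p.1 p.2) • Measure.dirac (pt p.1 p.2)) Set.univ
            = ENNReal.ofReal (q p.1 p.2) := by
        intro p
        rw [Measure.smul_apply, smul_eq_mul, measure_univ, mul_one]
      rw [Finset.sum_congr rfl fun p _ => h6 p,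
        ← ENNReal.ofReal_sum_of_nonneg (fun p _ => hqnn p.1 p.2), hqsum, ENNReal.ofReal_one]
    · rw [hμ, Measure.finset_sum_apply]
      refine Finset.sum_eq_zero fun p _ => ?_
      rcases eq_or_ne (A p.1) 0 with h | h
      · rw [hq0 p.1 h p.2]
        simp
      · rw [Measure.smul_apply,
          Measure.dirac_apply' _ Metric.isClosed_sphere.measurableSet.compl]
        rw [Set.indicator_of_notMem, smul_zero]
        simp [mem_sphere_zero_iff_norm, hsphere p.1 p.2 h]
    · intro a
      rw [hintegral (fun x => x a), Fintype.sum_prod_type]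
      have h7 : ∀ i, ∑ ε : Bool, q i ε * (pt i ε) a = (A i / c) * m a := by
        intro i
        rw [Fintype.sum_bool]
        exact hmean i a
      rw [Finset.sum_congr rfl fun i _ => h7 i, ← Finset.sum_mul, ← Finset.sum_div,
        hAsum, div_self hc0, one_mul]
    · intro a b
      rw [hintegral (fun x => x a * x b), Fintype.sum_prod_type]
      have h8 : ∀ i, ∑ ε : Bool, q i ε * ((pt i ε) a * (pt i ε) b)
          = (A i / c) * (m a * m b) + B i a * B i b := by
        intro i
        rw [Fintype.sum_bool]
        exact hsec i a b
      rw [Finset.sum_congr rfl fun i _ => h8 i, Finset.sum_add_distrib,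
        ← Finset.sum_mul, ← Finset.sum_div, hAsum, div_self hc0, one_mul, ← hE a b]
      ring

end SphereMomentAux

/-- characterization of the first and second moments of probability
    measures on a sphere of radius r: they are exactly the pairs (m, M) with
    tr M = r² and M − m mᵀ positive semidefinite. -/
theorem sphere_moment_characterization (r : ℝ) (hr : 0 < r)
    (m : Fin 3 → ℝ) (M : Matrix (Fin 3) (Fin 3) ℝ) (hM : M.IsSymm) :
    (∃ μ : Measure (EuclideanSpace ℝ (Fin 3)), IsProbabilityMeasure μ ∧
        μ (Metric.sphere (0 : EuclideanSpace ℝ (Fin 3)) r)ᶜ = 0 ∧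
        (∀ a : Fin 3, ∫ x, x a ∂μ = m a) ∧
        (∀ a b : Fin 3, ∫ x, x a * x b ∂μ = M a b)) ↔
      (M.trace = r ^ 2 ∧
        (Matrix.of fun a b => M a b - m a * m b : Matrix (Fin 3) (Fin 3) ℝ).PosSemidef) := by
  constructor
  · rintro ⟨μ, hp, hs, h1, h2⟩
    exact SphereMomentAux.fwd r hr m M hM μ hp hs h1 h2
  · rintro ⟨htr, hpsd⟩
    exact SphereMomentAux.bwd r hr m M hM htr hpsd
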